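/- If α = βπ with β irrational, then for every θ ∈ (0,π) the set C(θ) is countably infinite. -/

import Mathlib

open Real MeasureTheory Set Filter Topology
open scoped ENNReal NNReal

noncomputable section

namespace RandomBilliard

/-- The four maps `T_1, …, T_4` of the Feres random map
(index `i : Fin 4` stands for `T_{i+1}`). -/
def T (α : ℝ) : Fin 4 → ℝ → ℝ
  | 0 => fun θ => θ + 2 * α
  | 1 => fun θ => -θ + 2 * π - 4 * α
  | 2 => fun θ => θ - 2 * α
  | 3 => fun θ => -θ + 4 * α

/-- `u_a(θ) = (1/2)(1 + tan a / tan θ)`. -/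
def u (a θ : ℝ) : ℝ := 1 / 2 * (1 + Real.tan a / Real.tan θ)

/-- The probabilities `p_1, …, p_4` of the Feres random map
(index `i : Fin 4` stands for `p_{i+1}`). -/
def p (α : ℝ) : Fin 4 → ℝ → ℝ
  | 0 => fun θ =>
      if θ < α then 1
      else if θ < π - 3 * α then u α θ
      else if θ < π - 2 * α then 2 * Real.cos (2 * α) * u (2 * α) θ
      else 0
  | 1 => fun θ =>
      if θ < π - 3 * α then 0
      else if θ < π - 2 * α then u α θ - 2 * Real.cos (2 * α) * u (2 * α) θ
      else if θ < π - α then u α θ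
      else 0
  | 2 => fun θ =>
      if θ < 2 * α then 0
      else if θ < 3 * α then 2 * Real.cos (2 * α) * u (2 * α) (-θ)
      else if θ < π - α then u α (-θ)
      else 1
  | 3 => fun θ =>
      if θ < α then 0
      else if θ < 2 * α then u α (-θ)
      else if θ < 3 * α then u α (-θ) - 2 * Real.cos (2 * α) * u (2 * α) (-θ)
      else 0

/-- `iterT α x k θ = T_x^{(k)}(θ) = T_{x_k} ∘ ⋯ ∘ T_{x_1}(θ)`
(the term `x j : Fin 4` stands for the symbol `x_{j+1}`). -/
def iterT (α : ℝ) (x : ℕ → Fin 4) : ℕ → ℝ → ℝ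
  | 0 => fun θ => θ
  | k + 1 => fun θ => T α (x k) (iterT α x k θ)

/-- `Σ_θ`: the admissible symbol sequences for `θ`, i.e. those whose every finite
prefix has positive probability. -/
def SigmaTheta (α θ : ℝ) : Set (ℕ → Fin 4) :=
  {x | ∀ k : ℕ, 0 < ∏ j ∈ Finset.range k, p α (x j) (iterT α x j θ)}

/-- `C(θ)`: all possible future images of `θ` under the Feres random map. -/
def Cset (α θ : ℝ) : Set ℝ :=
  {θ' | θ' ∈ Set.Ioo 0 π ∧
    ∃ (x : ℕ → Fin 4) (k : ℕ), x ∈ SigmaTheta α θ ∧ iterT α x k θ = θ'}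

/-- The probability measure `μ(A) = (1/2) ∫_A sin θ dθ` on `[0, π]`. -/
def mu0 : Measure ℝ :=
  (volume.restrict (Set.Icc 0 π)).withDensity fun θ => ENNReal.ofReal (1 / 2 * Real.sin θ)

/-- One step of the evolution of a measure under the Feres random map:
`(stepMeasure α ν)(A) = ∫ K(θ, A) dν(θ)`, where `K(θ, A) = Σ_i p_i(θ) 1_A(T_i θ)`. -/
def stepMeasure (α : ℝ) (ν : Measure ℝ) : Measure ℝ :=
  ∑ i : Fin 4, Measure.map (T α i) (ν.withDensity fun θ => ENNReal.ofReal (p α i θ))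

/-- One step of the evolution of a measure under the random billiard map in the circle
`F̄(s, θ) = (s + 2 T_i(θ) mod 2π, T_i(θ))` with probability `p_i(θ)`. -/
def circleStep (α : ℝ) (ν : Measure (ℝ × ℝ)) : Measure (ℝ × ℝ) :=
  ∑ i : Fin 4,
    Measure.map
      (fun q : ℝ × ℝ => (toIcoMod Real.two_pi_pos 0 (q.1 + 2 * T α i q.2), T α i q.2))
      (ν.withDensity fun q => ENNReal.ofReal (p α i q.2))

/-- The transition kernel `K(θ', ·) = Σ_i p_i(θ') δ_{T_i(θ')}` of the Feres random map. -/
def feresKernel (α : ℝ) (t : ℝ) : Measure ℝ :=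
  ∑ i : Fin 4, ENNReal.ofReal (p α i t) • Measure.dirac (T α i t)

/-- `k`-step iterates of a transition kernel. -/
def kerIterate (κ : ℝ → Measure ℝ) : ℕ → ℝ → Measure ℝ
  | 0 => fun t => Measure.dirac t
  | k + 1 => fun t => (κ t).bind (kerIterate κ k)

/-- The probability that a Markov chain with kernel `κ` started at `t` satisfies
`θ_0 ∈ B 0, …, θ_n ∈ B n`. -/
def cylProb (κ : ℝ → Measure ℝ) : ℕ → (ℕ → Set ℝ) → ℝ → ℝ≥0∞
  | 0 => fun B t => Set.indicator (B 0) (fun _ => (1 : ℝ≥0∞)) t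
  | n + 1 => fun B t =>
      Set.indicator (B 0)
        (fun _ => ∫⁻ t', cylProb κ n (fun k => B (k + 1)) t' ∂(κ t)) t

/-- `ν` is the Markov path measure on `ℕ → ℝ` (given by the Ionescu–Tulcea construction)
with initial distribution `ρ` and transition kernel `κ`, characterized by its values
on cylinder sets. -/
def IsMarkovPathMeasure (κ : ℝ → Measure ℝ) (ρ : Measure ℝ) (ν : Measure (ℕ → ℝ)) : Prop :=
  ∀ (n : ℕ) (B : ℕ → Set ℝ), (∀ k, MeasurableSet (B k)) →
    ν {ω | ∀ k ≤ n, ω k ∈ B k} = ∫⁻ t, cylProb κ n B t ∂ρ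

/-- The shift map on sequences. -/
def shift : (ℕ → ℝ) → ℕ → ℝ := fun ω n => ω (n + 1)

/-- Aperiodicity of the Markov chain with kernel `κ` on the state space `S`:
for every state, every common divisor of the return times having positive
probability equals `1` (i.e. every state has period 1). -/
def AperiodicChain (κ : ℝ → Measure ℝ) (S : Set ℝ) : Prop :=
  ∀ t ∈ S, ∀ d : ℕ, (∀ k : ℕ, 1 ≤ k → 0 < kerIterate κ k t {t} → d ∣ k) → d = 1

end RandomBilliard

open RandomBilliard

namespace CsetProof
open RandomBilliard

lemma T0 (α t : ℝ) : T α 0 t = t + 2*α := rfl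
lemma T1 (α t : ℝ) : T α 1 t = -t + 2*π - 4*α := rfl
lemma T2 (α t : ℝ) : T α 2 t = t - 2*α := rfl
lemma T3 (α t : ℝ) : T α 3 t = -t + 4*α := rfl

lemma u_pos {a t : ℝ} (ha0 : 0 < a) (ha : a < π/2) (h1 : a ≤ t) (h2 : t < π - a) :
    0 < u a t := by
  have hta : 0 < Real.tan a := Real.tan_pos_of_pos_of_lt_pi_div_two ha0 ha
  unfold u
  rcases lt_trichotomy t (π/2) with h | h | h
  · have htt : 0 < Real.tan t := Real.tan_pos_of_pos_of_lt_pi_div_two (lt_of_lt_of_le ha0 h1) h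
    have hle : Real.tan a ≤ Real.tan t := by
      rcases eq_or_lt_of_le h1 with rfl | h1
      · exact le_refl _
      · exact (Real.tan_lt_tan_of_nonneg_of_lt_pi_div_two ha0.le h h1).le
    have : 0 < Real.tan a / Real.tan t := div_pos hta htt
    linarith
  · rw [h, Real.tan_pi_div_two, div_zero]; norm_num
  · have hpt : Real.tan a < Real.tan (π - t) :=
      Real.tan_lt_tan_of_nonneg_of_lt_pi_div_two ha0.le (by linarith) (by linarith)
    have hptpos : 0 < Real.tan (π - t) := lt_trans hta hpt
    have hteq : Real.tan t = -Real.tan (π - t) := by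
      have := Real.tan_pi_sub t; linarith
    have hr : Real.tan a / Real.tan (π - t) < 1 := (div_lt_one hptpos).2 hpt
    rw [hteq, div_neg]
    linarith

lemma u_neg_pos {a t : ℝ} (ha0 : 0 < a) (ha : a < π/2) (h1 : a < t) (h2 : t < π) :
    0 < u a (-t) := by
  have hta : 0 < Real.tan a := Real.tan_pos_of_pos_of_lt_pi_div_two ha0 ha
  unfold u
  rw [Real.tan_neg, div_neg]
  rcases lt_trichotomy t (π/2) with h | h | h
  · have hpt : Real.tan a < Real.tan t :=
      Real.tan_lt_tan_of_nonneg_of_lt_pi_div_two ha0.le h h1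
    have htt : 0 < Real.tan t := lt_trans hta hpt
    have hr : Real.tan a / Real.tan t < 1 := (div_lt_one htt).2 hpt
    linarith
  · rw [h, Real.tan_pi_div_two, div_zero]; norm_num
  · have hptpos : 0 < Real.tan (π - t) :=
      Real.tan_pos_of_pos_of_lt_pi_div_two (by linarith) (by linarith)
    have hteq : Real.tan t = -Real.tan (π - t) := by
      have := Real.tan_pi_sub t; linarith
    have : 0 < Real.tan a / Real.tan (π - t) := div_pos hta hptpos
    rw [hteq, div_neg, neg_neg]
    linarith

lemma cos3 (α : ℝ) : Real.cos (3*α) = 2*Real.cos α * Real.cos (2*α) - Real.cos α := by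
  have h1 := Real.cos_add (2*α) α
  have h2 := Real.cos_sub (2*α) α
  have e1 : 2*α + α = 3*α := by ring
  have e2 : 2*α - α = α := by ring
  rw [e1] at h1; rw [e2] at h2; linarith

lemma sin3 (α : ℝ) : Real.sin (3*α) = 2*Real.cos α * Real.sin (2*α) - Real.sin α := by
  have h1 := Real.sin_add (2*α) α
  have h2 := Real.sin_sub (2*α) α
  have e1 : 2*α + α = 3*α := by ring
  have e2 : 2*α - α = α := by ring
  rw [e1] at h1; rw [e2] at h2; linarith

lemma g_pos {α : ℝ} (h0 : 0 < α) (h6 : α < π/6) {s : ℝ} (hs : 0 < s)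
    (hlt : s < Real.tan (3*α)) :
    0 < (1/2 - Real.cos (2*α)) + (Real.sin (2*α) - Real.tan α/2) / s := by
  have hπ := Real.pi_pos
  have hca : 0 < Real.cos α := Real.cos_pos_of_mem_Ioo ⟨by linarith, by linarith⟩
  have hc3 : 0 < Real.cos (3*α) := Real.cos_pos_of_mem_Ioo ⟨by linarith, by linarith⟩
  have hs3 : 0 < Real.sin (3*α) := Real.sin_pos_of_pos_of_lt_pi (by linarith) (by linarith)
  have ht3 : 0 < Real.tan (3*α) := lt_trans hs hlt
  have hd : Real.sin (2*α) - Real.tan α/2 = Real.sin (3*α) / (2*Real.cos α) := by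
    rw [Real.tan_eq_sin_div_cos, sin3]
    field_simp
  have hcc : Real.cos (2*α) - 1/2 = Real.cos (3*α) / (2*Real.cos α) := by
    rw [cos3]
    field_simp
  have hdpos : 0 < Real.sin (2*α) - Real.tan α/2 := by
    rw [hd]; positivity
  have hcpos : 0 < Real.cos (2*α) - 1/2 := by
    rw [hcc]; positivity
  have hid : Real.sin (2*α) - Real.tan α/2 = (Real.cos (2*α) - 1/2) * Real.tan (3*α) := by
    rw [hd, hcc, Real.tan_eq_sin_div_cos]
    field_simp
  have key : (Real.cos (2*α) - 1/2) * s < Real.sin (2*α) - Real.tan α/2 := by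
    rw [hid]
    exact (mul_lt_mul_iff_right₀ hcpos).2 hlt
  have : (Real.cos (2*α) - 1/2) < (Real.sin (2*α) - Real.tan α/2) / s :=
    (lt_div_iff₀ hs).2 key
  linarith

end CsetProof

namespace CsetProof
open RandomBilliard

lemma diff_eq (α s : ℝ) (hs : s ≠ 0) (hc : Real.cos (2*α) ≠ 0) :
    1/2*(1 + Real.tan α / (-s)) - 2*Real.cos (2*α)*(1/2*(1 + Real.tan (2*α) / (-s)))
      = (1/2 - Real.cos (2*α)) + (Real.sin (2*α) - Real.tan α/2) / s := by
  rw [Real.tan_eq_sin_div_cos (2*α), div_neg, div_neg]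
  field_simp
  ring

lemma p0_def (α t : ℝ) : p α 0 t = (if t < α then 1
      else if t < π - 3 * α then u α t
      else if t < π - 2 * α then 2 * Real.cos (2 * α) * u (2 * α) t
      else 0) := rfl

lemma p1_def (α t : ℝ) : p α 1 t = (if t < π - 3 * α then 0
      else if t < π - 2 * α then u α t - 2 * Real.cos (2 * α) * u (2 * α) t
      else if t < π - α then u α t
      else 0) := rfl

lemma p2_def (α t : ℝ) : p α 2 t = (if t < 2 * α then 0
      else if t < 3 * α then 2 * Real.cos (2 * α) * u (2 * α) (-t)
      else if t < π - α then u α (-t)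
      else 1) := rfl

lemma p3_def (α t : ℝ) : p α 3 t = (if t < α then 0
      else if t < 2 * α then u α (-t)
      else if t < 3 * α then u α (-t) - 2 * Real.cos (2 * α) * u (2 * α) (-t)
      else 0) := rfl

lemma cos2_pos {α : ℝ} (h0 : 0 < α) (h6 : α < π/6) : 0 < Real.cos (2*α) := by
  have hπ := Real.pi_pos
  exact Real.cos_pos_of_mem_Ioo ⟨by linarith, by linarith⟩

lemma p0_pos {α t : ℝ} (h0 : 0 < α) (h6 : α < π/6) (ht : t ∈ Set.Ioo 0 (π - 2*α)) :
    0 < p α 0 t := by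
  have hπ := Real.pi_pos
  obtain ⟨ht1, ht2⟩ := ht
  rw [p0_def]
  split_ifs with h1 h2
  · norm_num
  · exact u_pos h0 (by linarith) (not_lt.1 h1) (by linarith)
  · exact mul_pos (by linarith [cos2_pos h0 h6])
      (u_pos (by linarith) (by linarith) (by linarith [not_lt.1 h2]) (by linarith))

lemma p1_pos {α t : ℝ} (h0 : 0 < α) (h6 : α < π/6) (ht : t ∈ Set.Ioo (π - 3*α) (π - α)) :
    0 < p α 1 t := by
  have hπ := Real.pi_pos
  obtain ⟨ht1, ht2⟩ := ht
  rw [p1_def]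
  split_ifs with h1 h2
  · linarith
  · -- t ∈ (π-3α, π-2α); set s = tan (π - t) ∈ (tan 2α, tan 3α)
    have hs : 0 < Real.tan (π - t) :=
      Real.tan_pos_of_pos_of_lt_pi_div_two (by linarith) (by linarith)
    have hlt : Real.tan (π - t) < Real.tan (3*α) :=
      Real.tan_lt_tan_of_nonneg_of_lt_pi_div_two (by linarith) (by linarith) (by linarith)
    have hg := g_pos h0 h6 hs hlt
    have htt : Real.tan t = -(Real.tan (π - t)) := by
      have := Real.tan_pi_sub t; linarith
    have he := diff_eq α (Real.tan (π - t)) (ne_of_gt hs) (ne_of_gt (cos2_pos h0 h6))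
    unfold u
    rw [htt]
    linarith [he, hg]
  · exact u_pos h0 (by linarith) (by linarith [not_lt.1 h2]) ht2

lemma p2_pos {α t : ℝ} (h0 : 0 < α) (h6 : α < π/6) (ht : t ∈ Set.Ioo (2*α) π) :
    0 < p α 2 t := by
  have hπ := Real.pi_pos
  obtain ⟨ht1, ht2⟩ := ht
  rw [p2_def]
  split_ifs with h1 h2 h3
  · linarith
  · exact mul_pos (by linarith [cos2_pos h0 h6])
      (u_neg_pos (by linarith) (by linarith) ht1 ht2)
  · exact u_neg_pos h0 (by linarith) (by linarith [not_lt.1 h2]) ht2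
  · norm_num

lemma p3_pos {α t : ℝ} (h0 : 0 < α) (h6 : α < π/6) (ht : t ∈ Set.Ioo α (3*α)) :
    0 < p α 3 t := by
  have hπ := Real.pi_pos
  obtain ⟨ht1, ht2⟩ := ht
  rw [p3_def]
  split_ifs with h1 h2
  · linarith
  · exact u_neg_pos h0 (by linarith) ht1 (by linarith)
  · have hs : 0 < Real.tan t :=
      Real.tan_pos_of_pos_of_lt_pi_div_two (by linarith) (by linarith)
    have hlt : Real.tan t < Real.tan (3*α) :=
      Real.tan_lt_tan_of_nonneg_of_lt_pi_div_two (by linarith) (by linarith) ht2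
    have hg := g_pos h0 h6 hs hlt
    have he := diff_eq α (Real.tan t) (ne_of_gt hs) (ne_of_gt (cos2_pos h0 h6))
    unfold u
    rw [Real.tan_neg]
    linarith [he, hg]

end CsetProof

namespace CsetProof
open RandomBilliard

/-- One admissible step of the Feres random map, staying inside `(0, π)`. -/
def Step (α : ℝ) (t t' : ℝ) : Prop :=
  t ∈ Set.Ioo 0 π ∧ t' ∈ Set.Ioo 0 π ∧ ∃ i : Fin 4, 0 < p α i t ∧ T α i t = t'

lemma reach_mem {α θ v : ℝ} (hθ : θ ∈ Set.Ioo 0 π)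
    (h : Relation.ReflTransGen (Step α) θ v) : v ∈ Set.Ioo 0 π := by
  rcases h.cases_tail with rfl | ⟨c, _, hs⟩
  · exact hθ
  · exact hs.2.1

lemma stepU {α t : ℝ} (h0 : 0 < α) (h6 : α < π/6) (ht : t ∈ Set.Ioo 0 π)
    (h : t + 2*α < π) : Step α t (t + 2*α) :=
  ⟨ht, ⟨by linarith [ht.1], h⟩, 0, p0_pos h0 h6 ⟨ht.1, by linarith⟩, rfl⟩

lemma stepD {α t : ℝ} (h0 : 0 < α) (h6 : α < π/6) (ht : t ∈ Set.Ioo 0 π)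
    (h : 0 < t - 2*α) : Step α t (t - 2*α) :=
  ⟨ht, ⟨h, by linarith [ht.2]⟩, 2, p2_pos h0 h6 ⟨by linarith, ht.2⟩, rfl⟩

lemma step1 {α t : ℝ} (h0 : 0 < α) (h6 : α < π/6) (ht : t ∈ Set.Ioo (π - 3*α) (π - α)) :
    Step α t (-t + 2*π - 4*α) := by
  have hπ := Real.pi_pos
  exact ⟨⟨by linarith [ht.1], by linarith [ht.2]⟩,
    ⟨by linarith [ht.2], by linarith [ht.1]⟩, 1, p1_pos h0 h6 ht, rfl⟩

lemma step3 {α t : ℝ} (h0 : 0 < α) (h6 : α < π/6) (ht : t ∈ Set.Ioo α (3*α)) :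
    Step α t (-t + 4*α) := by
  have hπ := Real.pi_pos
  exact ⟨⟨by linarith [ht.1], by linarith [ht.2]⟩,
    ⟨by linarith [ht.2], by linarith [ht.1]⟩, 3, p3_pos h0 h6 ht, rfl⟩

lemma reach_up {α θ v : ℝ} (h0 : 0 < α) (h6 : α < π/6) (hθ : θ ∈ Set.Ioo 0 π)
    (hv : Relation.ReflTransGen (Step α) θ v) :
    ∀ n : ℕ, v + 2*α*n < π → Relation.ReflTransGen (Step α) θ (v + 2*α*n) := by
  intro n
  induction n with
  | zero => intro _; simpa using hv
  | succ n ih =>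
    intro h
    have hcast : v + 2*α*((n+1 : ℕ) : ℝ) = (v + 2*α*n) + 2*α := by push_cast; ring
    rw [hcast] at h ⊢
    have h' : v + 2*α*(n : ℝ) < π := by linarith
    have hr := ih h'
    exact hr.tail (stepU h0 h6 (reach_mem hθ hr) h)

lemma reach_dn {α θ v : ℝ} (h0 : 0 < α) (h6 : α < π/6) (hθ : θ ∈ Set.Ioo 0 π)
    (hv : Relation.ReflTransGen (Step α) θ v) :
    ∀ n : ℕ, 0 < v - 2*α*n → Relation.ReflTransGen (Step α) θ (v - 2*α*n) := by
  intro n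
  induction n with
  | zero => intro _; simpa using hv
  | succ n ih =>
    intro h
    have hcast : v - 2*α*((n+1 : ℕ) : ℝ) = (v - 2*α*n) - 2*α := by push_cast; ring
    rw [hcast] at h ⊢
    have h' : 0 < v - 2*α*(n : ℝ) := by linarith
    have hr := ih h'
    exact hr.tail (stepD h0 h6 (reach_mem hθ hr) h)

lemma reach_shift {α θ v : ℝ} (h0 : 0 < α) (h6 : α < π/6) (hθ : θ ∈ Set.Ioo 0 π)
    (hv : Relation.ReflTransGen (Step α) θ v) (j : ℤ)
    (hm : v + 2*α*j ∈ Set.Ioo 0 π) :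
    Relation.ReflTransGen (Step α) θ (v + 2*α*j) := by
  rcases Int.eq_nat_or_neg j with ⟨n, rfl | rfl⟩
  · have : v + 2*α*((n : ℤ) : ℝ) = v + 2*α*(n : ℝ) := by push_cast; ring
    rw [this] at hm ⊢
    exact reach_up h0 h6 hθ hv n hm.2
  · have : v + 2*α*(((-(n : ℤ)) : ℤ) : ℝ) = v - 2*α*(n : ℝ) := by push_cast; ring
    rw [this] at hm ⊢
    exact reach_dn h0 h6 hθ hv n hm.1

lemma window {α : ℝ} (h0 : 0 < α) {r w : ℝ} (h : ¬ ∃ j : ℤ, r = w + 2*α*j) :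
    ∃ j : ℤ, r + 2*α*j ∈ Set.Ioo w (w + 2*α) := by
  have h2α : (0:ℝ) < 2*α := by linarith
  refine ⟨⌈(w - r)/(2*α)⌉, ?_, ?_⟩
  · have h1 : (w - r)/(2*α) ≤ (⌈(w - r)/(2*α)⌉ : ℝ) := Int.le_ceil _
    have hle : w - r ≤ 2*α*(⌈(w - r)/(2*α)⌉ : ℝ) := by
      rw [div_le_iff₀ h2α] at h1; linarith
    rcases eq_or_lt_of_le hle with heq | hlt
    · exact absurd ⟨-⌈(w - r)/(2*α)⌉, by push_cast; linarith⟩ h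
    · linarith
  · have h1 : (⌈(w - r)/(2*α)⌉ : ℝ) < (w - r)/(2*α) + 1 := Int.ceil_lt_add_one _
    have : 2*α*(⌈(w - r)/(2*α)⌉ : ℝ) < w - r + 2*α := by
      rw [div_add' _ _ _ (ne_of_gt h2α), lt_div_iff₀ h2α] at h1
      linarith [h1]
    linarith

end CsetProof

namespace CsetProof
open RandomBilliard

/-- Greedy symbol choice keeping the state in `(0,π)`. -/
def gsym (α t : ℝ) : Fin 4 := if t < π - 2*α then 0 else 2

lemma gsym_spec {α t : ℝ} (h0 : 0 < α) (h6 : α < π/6) (ht : t ∈ Set.Ioo 0 π) :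
    0 < p α (gsym α t) t ∧ T α (gsym α t) t ∈ Set.Ioo 0 π := by
  have hπ := Real.pi_pos
  unfold gsym
  split_ifs with h
  · refine ⟨p0_pos h0 h6 ⟨ht.1, by linarith⟩, ?_⟩
    rw [T0]; exact ⟨by linarith [ht.1], by linarith⟩
  · push_neg at h
    refine ⟨p2_pos h0 h6 ⟨by linarith, ht.2⟩, ?_⟩
    rw [T2]; exact ⟨by linarith, by linarith [ht.2]⟩

/-- The greedy orbit started at `v`. -/
def gstate (α v : ℝ) : ℕ → ℝ
  | 0 => v
  | n+1 => T α (gsym α (gstate α v n)) (gstate α v n)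

lemma gstate_mem {α v : ℝ} (h0 : 0 < α) (h6 : α < π/6) (hv : v ∈ Set.Ioo 0 π) :
    ∀ n, gstate α v n ∈ Set.Ioo 0 π := by
  intro n
  induction n with
  | zero => exact hv
  | succ n ih => exact (gsym_spec h0 h6 ih).2

lemma iterT_congr (α : ℝ) (x y : ℕ → Fin 4) (θ : ℝ) :
    ∀ k, (∀ j < k, x j = y j) → iterT α x k θ = iterT α y k θ := by
  intro k
  induction k with
  | zero => intro _; rfl
  | succ k ih =>
    intro h
    show T α (x k) (iterT α x k θ) = T α (y k) (iterT α y k θ)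
    rw [h k (Nat.lt_succ_self k), ih (fun j hj => h j (Nat.lt_succ_of_lt hj))]

lemma mem_Cset_of_reach {α θ v : ℝ} (h0 : 0 < α) (h6 : α < π/6)
    (hθ : θ ∈ Set.Ioo 0 π) (hr : Relation.ReflTransGen (Step α) θ v) :
    v ∈ Cset α θ := by
  have hvIoo : v ∈ Set.Ioo 0 π := reach_mem hθ hr
  -- extract a finite admissible word
  have hfin : ∃ (k : ℕ) (y : ℕ → Fin 4), iterT α y k θ = v ∧
      ∀ j < k, 0 < p α (y j) (iterT α y j θ) := by
    clear hvIoo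
    induction hr with
    | refl => exact ⟨0, fun _ => 0, rfl, fun j hj => absurd hj (Nat.not_lt_zero j)⟩
    | @tail b c _ hbc ih =>
      obtain ⟨k, y, hky, hpos⟩ := ih
      obtain ⟨hbIoo, hcIoo, i, hpi, hTi⟩ := hbc
      refine ⟨k+1, fun j => if j < k then y j else i, ?_, ?_⟩
      · show T α (if k < k then y k else i) (iterT α _ k θ) = c
        rw [if_neg (lt_irrefl k),
          iterT_congr α _ y θ k (fun j hj => by simp [hj]), hky, hTi]
      · intro j hj
        show 0 < p α (if j < k then y j else i)
          (iterT α (fun j => if j < k then y j else i) j θ)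
        rcases Nat.lt_or_ge j k with h | h
        · have e1 : iterT α (fun j => if j < k then y j else i) j θ = iterT α y j θ :=
            iterT_congr α _ y θ j (fun j' hj' => by simp [lt_trans hj' h])
          rw [e1, if_pos h]
          exact hpos j h
        · have hjk : j = k := by omega
          have e1 : iterT α (fun j => if j < k then y j else i) j θ = iterT α y j θ :=
            iterT_congr α _ y θ j (fun j' hj' => by simp [show j' < k by omega])
          rw [e1, if_neg (by omega : ¬ j < k), hjk, hky]
          exact hpi
  obtain ⟨k, y, hky, hpos⟩ := hfin
  set x : ℕ → Fin 4 := fun j => if j < k then y j else gsym α (gstate α v (j - k)) with hx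
  have hiter : ∀ j, (j ≤ k → iterT α x j θ = iterT α y j θ) ∧
      (k ≤ j → iterT α x j θ = gstate α v (j - k)) := by
    intro j
    induction j with
    | zero =>
      refine ⟨fun _ => rfl, fun hk0 => ?_⟩
      have hk : k = 0 := Nat.le_zero.mp hk0
      subst hk
      exact hky
    | succ j ih =>
      constructor
      · intro hj
        have hjk : j < k := hj
        show T α (x j) (iterT α x j θ) = T α (y j) (iterT α y j θ)
        rw [ih.1 hjk.le]
        congr 1
        simp [hx, hjk]
      · intro hk
        rcases Nat.lt_or_ge j k with h | h
        · have hjk : k = j + 1 := by omega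
          have e1 : iterT α x (j+1) θ = iterT α y (j+1) θ :=
            iterT_congr α x y θ (j+1) (fun j' hj' => by
              simp [hx, show j' < k by omega])
          have e0 : j + 1 - k = 0 := by omega
          rw [e1, e0]
          show iterT α y (j+1) θ = v
          rw [← hjk]
          exact hky
        · have e1 : x j = gsym α (gstate α v (j - k)) := by
            simp [hx, Nat.not_lt.2 h]
          show T α (x j) (iterT α x j θ) = gstate α v (j + 1 - k)
          rw [ih.2 h, e1]
          have e2 : j + 1 - k = (j - k) + 1 := by omega
          rw [e2]
          rfl
  refine ⟨hvIoo, x, k, ?_, ?_⟩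
  · intro K
    apply Finset.prod_pos
    intro j _
    rcases Nat.lt_or_ge j k with h | h
    · have e2 : x j = y j := by simp [hx, h]
      rw [(hiter j).1 h.le, e2]
      exact hpos j h
    · have e2 : x j = gsym α (gstate α v (j - k)) := by simp [hx, Nat.not_lt.2 h]
      rw [(hiter j).2 h, e2]
      exact (gsym_spec h0 h6 (gstate_mem h0 h6 hvIoo _)).1
  · rw [(hiter k).1 le_rfl, hky]

end CsetProof

namespace CsetProof
open RandomBilliard

lemma key_irr {α β : ℝ} (hβ : Irrational β) (hαβ : α = β * π) :
    ∀ s k : ℤ, (s : ℝ) * π = 2*α*k → s = 0 := by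
  intro s k h
  have hπ : (0:ℝ) < π := Real.pi_pos
  rcases eq_or_ne k 0 with rfl | hk
  · push_cast at h
    have : (s : ℝ) = 0 := by
      have := mul_eq_zero.1 (by linarith : (s:ℝ) * π = 0)
      rcases this with h' | h'
      · exact h'
      · exact absurd h' (ne_of_gt hπ)
    exact_mod_cast this
  · exfalso
    rw [hαβ] at h
    have h' : (s : ℝ) = 2*β*k := by
      have h2 : (s : ℝ) * π = (2*β*(k:ℝ)) * π := by linarith [h]
      exact mul_right_cancel₀ (ne_of_gt hπ) h2
    have hk' : ((k:ℝ)) ≠ 0 := Int.cast_ne_zero.2 hk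
    apply hβ
    refine ⟨(s : ℚ) / (2 * (k : ℚ)), ?_⟩
    push_cast
    rw [h']
    field_simp

lemma move_up {α θ : ℝ} (h0 : 0 < α) (h6 : α < π/6) (hθ : θ ∈ Set.Ioo 0 π) (m : ℤ)
    (hm : ∃ v, Relation.ReflTransGen (Step α) θ v ∧ ∃ j : ℤ, v = θ + 2*π*m + 2*α*j)
    (h1 : ¬ ∃ j : ℤ, θ + 2*π*m = α + 2*α*j)
    (h2 : ¬ ∃ j : ℤ, -(θ + 2*π*m) = (π - 3*α) + 2*α*j) :
    ∃ v, Relation.ReflTransGen (Step α) θ v ∧ ∃ j : ℤ, v = θ + 2*π*(m+1) + 2*α*j := by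
  have hπ := Real.pi_pos
  obtain ⟨v, hv, j, hvj⟩ := hm
  obtain ⟨j₁, hj₁⟩ := window h0 h1
  set w₁ := θ + 2*π*m + 2*α*j₁ with hw₁
  have hw₁b : w₁ ∈ Set.Ioo α (3*α) := by
    refine ⟨hj₁.1, ?_⟩; have := hj₁.2; linarith
  have hw₁Ioo : w₁ ∈ Set.Ioo 0 π := ⟨by linarith [hw₁b.1], by linarith [hw₁b.2]⟩
  have e1 : v + 2*α*((j₁ - j : ℤ) : ℝ) = w₁ := by push_cast; rw [hvj]; ring
  have hr₁ : Relation.ReflTransGen (Step α) θ w₁ := by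
    have := reach_shift h0 h6 hθ hv (j₁ - j) (by rw [e1]; exact hw₁Ioo)
    rwa [e1] at this
  have hr₂ : Relation.ReflTransGen (Step α) θ (-w₁ + 4*α) := hr₁.tail (step3 h0 h6 hw₁b)
  obtain ⟨j₂, hj₂⟩ := window h0 h2
  set w₃ := -(θ + 2*π*m) + 2*α*j₂ with hw₃
  have hw₃b : w₃ ∈ Set.Ioo (π - 3*α) (π - α) := by
    refine ⟨hj₂.1, ?_⟩; have := hj₂.2; linarith
  have hw₃Ioo : w₃ ∈ Set.Ioo 0 π := ⟨by linarith [hw₃b.1], by linarith [hw₃b.2]⟩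
  have e2 : (-w₁ + 4*α) + 2*α*((j₂ + j₁ - 2 : ℤ) : ℝ) = w₃ := by
    push_cast; rw [hw₁]; ring
  have hr₃ : Relation.ReflTransGen (Step α) θ w₃ := by
    have := reach_shift h0 h6 hθ hr₂ (j₂ + j₁ - 2) (by rw [e2]; exact hw₃Ioo)
    rwa [e2] at this
  have hr₄ : Relation.ReflTransGen (Step α) θ (-w₃ + 2*π - 4*α) :=
    hr₃.tail (step1 h0 h6 hw₃b)
  exact ⟨-w₃ + 2*π - 4*α, hr₄, -j₂ - 2, by rw [hw₃]; push_cast; ring⟩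

lemma move_dn {α θ : ℝ} (h0 : 0 < α) (h6 : α < π/6) (hθ : θ ∈ Set.Ioo 0 π) (m : ℤ)
    (hm : ∃ v, Relation.ReflTransGen (Step α) θ v ∧ ∃ j : ℤ, v = θ + 2*π*m + 2*α*j)
    (h1 : ¬ ∃ j : ℤ, θ + 2*π*m = (π - 3*α) + 2*α*j)
    (h2 : ¬ ∃ j : ℤ, -(θ + 2*π*m) + 2*π = α + 2*α*j) :
    ∃ v, Relation.ReflTransGen (Step α) θ v ∧ ∃ j : ℤ, v = θ + 2*π*(m-1) + 2*α*j := by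
  have hπ := Real.pi_pos
  obtain ⟨v, hv, j, hvj⟩ := hm
  obtain ⟨j₁, hj₁⟩ := window h0 h1
  set w₁ := θ + 2*π*m + 2*α*j₁ with hw₁
  have hw₁b : w₁ ∈ Set.Ioo (π - 3*α) (π - α) := by
    refine ⟨hj₁.1, ?_⟩; have := hj₁.2; linarith
  have hw₁Ioo : w₁ ∈ Set.Ioo 0 π := ⟨by linarith [hw₁b.1], by linarith [hw₁b.2]⟩
  have e1 : v + 2*α*((j₁ - j : ℤ) : ℝ) = w₁ := by push_cast; rw [hvj]; ring
  have hr₁ : Relation.ReflTransGen (Step α) θ w₁ := by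
    have := reach_shift h0 h6 hθ hv (j₁ - j) (by rw [e1]; exact hw₁Ioo)
    rwa [e1] at this
  have hr₂ : Relation.ReflTransGen (Step α) θ (-w₁ + 2*π - 4*α) :=
    hr₁.tail (step1 h0 h6 hw₁b)
  obtain ⟨j₂, hj₂⟩ := window h0 h2
  set w₃ := (-(θ + 2*π*m) + 2*π) + 2*α*j₂ with hw₃
  have hw₃b : w₃ ∈ Set.Ioo α (3*α) := by
    refine ⟨hj₂.1, ?_⟩; have := hj₂.2; linarith
  have hw₃Ioo : w₃ ∈ Set.Ioo 0 π := ⟨by linarith [hw₃b.1], by linarith [hw₃b.2]⟩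
  have e2 : (-w₁ + 2*π - 4*α) + 2*α*((j₂ + j₁ + 2 : ℤ) : ℝ) = w₃ := by
    push_cast; rw [hw₁]; ring
  have hr₃ : Relation.ReflTransGen (Step α) θ w₃ := by
    have := reach_shift h0 h6 hθ hr₂ (j₂ + j₁ + 2) (by rw [e2]; exact hw₃Ioo)
    rwa [e2] at this
  have hr₄ : Relation.ReflTransGen (Step α) θ (-w₃ + 4*α) :=
    hr₃.tail (step3 h0 h6 hw₃b)
  exact ⟨-w₃ + 4*α, hr₄, 2 - j₂, by rw [hw₃]; push_cast; ring⟩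

lemma iter_form (α θ : ℝ) (x : ℕ → Fin 4) :
    ∀ k, ∃ (e : Bool) (m n : ℤ),
      iterT α x k θ = (cond e θ (-θ)) + m*α + n*π := by
  intro k
  induction k with
  | zero => exact ⟨true, 0, 0, by show θ = _; simp⟩
  | succ k ih =>
    obtain ⟨e, m, n, he⟩ := ih
    have hstep : iterT α x (k+1) θ = T α (x k) (iterT α x k θ) := rfl
    have h4 : x k = 0 ∨ x k = 1 ∨ x k = 2 ∨ x k = 3 := by
      have h4' : ∀ i : Fin 4, i = 0 ∨ i = 1 ∨ i = 2 ∨ i = 3 := by decide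
      exact h4' (x k)
    rcases h4 with h | h | h | h
    · refine ⟨e, m+2, n, ?_⟩
      rw [hstep, h, T0, he]; push_cast; ring
    · cases e with
      | true => exact ⟨false, -m-4, -n+2, by
          rw [hstep, h, T1, he]
          simp only [Bool.cond_true, Bool.cond_false]; push_cast; ring⟩
      | false => exact ⟨true, -m-4, -n+2, by
          rw [hstep, h, T1, he]
          simp only [Bool.cond_true, Bool.cond_false]; push_cast; ring⟩
    · refine ⟨e, m-2, n, ?_⟩
      rw [hstep, h, T2, he]; push_cast; ring
    · cases e with
      | true => exact ⟨false, -m+4, -n, by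
          rw [hstep, h, T3, he]
          simp only [Bool.cond_true, Bool.cond_false]; push_cast; ring⟩
      | false => exact ⟨true, -m+4, -n, by
          rw [hstep, h, T3, he]
          simp only [Bool.cond_true, Bool.cond_false]; push_cast; ring⟩

end CsetProof


/-- if `α = βπ` with `β` irrational, then `C(θ)` is countably infinite
for every `θ ∈ (0, π)`. -/
theorem Cset_countably_infinite_of_irrational (α β : ℝ) (hα : α ∈ Set.Ioo 0 (π / 6))
    (hβ : Irrational β) (hαβ : α = β * π) :
    ∀ θ ∈ Set.Ioo 0 π, (Cset α θ).Countable ∧ (Cset α θ).Infinite := by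
  obtain ⟨h0, h6⟩ := hα
  have h6' : α < π/6 := h6
  intro θ hθ
  have hπ := Real.pi_pos
  have hkey := CsetProof.key_irr hβ hαβ
  constructor
  · -- countable
    have hsub : Cset α θ ⊆ Set.range (fun q : Bool × ℤ × ℤ =>
        (cond q.1 θ (-θ)) + q.2.1*α + q.2.2*π) := by
      rintro v ⟨-, x, k, -, rfl⟩
      obtain ⟨e, m, n, he⟩ := CsetProof.iter_form α θ x k
      exact ⟨(e, m, n), he.symm⟩
    exact Set.Countable.mono hsub (Set.countable_range _)
  · -- infinite
    set M : Set ℤ := {m | ∃ v, Relation.ReflTransGen (CsetProof.Step α) θ v ∧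
        ∃ j : ℤ, v = θ + 2*π*m + 2*α*j} with hM
    have h0M : (0:ℤ) ∈ M := ⟨θ, Relation.ReflTransGen.refl, 0, by push_cast; ring⟩
    have hMinf : M.Infinite := by
      by_contra hfin
      rw [Set.not_infinite] at hfin
      obtain ⟨b, hbM, hbmax⟩ := Set.Finite.exists_maximalFor id M hfin ⟨0, h0M⟩
      obtain ⟨a, haM, hamin⟩ := Set.Finite.exists_minimalFor id M hfin ⟨0, h0M⟩
      have hab : a ≤ b := by
        by_contra hba
        push_neg at hba
        have := hamin hbM (by simp only [id_eq]; omega)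
        simp only [id_eq] at this
        omega
      have hbup : (∃ j : ℤ, θ + 2*π*b = α + 2*α*j) ∨
          (∃ j : ℤ, -(θ + 2*π*b) = (π - 3*α) + 2*α*j) := by
        by_contra hcon
        push_neg at hcon
        obtain ⟨v, hv, j, hj⟩ :=
          CsetProof.move_up h0 h6' hθ b hbM (not_exists.2 hcon.1) (not_exists.2 hcon.2)
        have hb1 : b + 1 ∈ M := ⟨v, hv, j, by push_cast; linarith⟩
        have := hbmax hb1 (by simp only [id_eq]; omega)
        simp only [id_eq] at this
        omega
      have hadn : (∃ j : ℤ, θ + 2*π*a = (π - 3*α) + 2*α*j) ∨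
          (∃ j : ℤ, -(θ + 2*π*a) + 2*π = α + 2*α*j) := by
        by_contra hcon
        push_neg at hcon
        obtain ⟨v, hv, j, hj⟩ :=
          CsetProof.move_dn h0 h6' hθ a haM (not_exists.2 hcon.1) (not_exists.2 hcon.2)
        have ha1 : a - 1 ∈ M := ⟨v, hv, j, by push_cast; linarith⟩
        have := hamin ha1 (by simp only [id_eq]; omega)
        simp only [id_eq] at this
        omega
      rcases hbup with ⟨j₁, e₁⟩ | ⟨j₁, e₁⟩ <;> rcases hadn with ⟨j₂, e₂⟩ | ⟨j₂, e₂⟩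
      · have := hkey (2*(b-a)+1) (j₁ - j₂ + 2) (by push_cast; linarith)
        omega
      · have := hkey (2*(b-a)+2) (j₁ + j₂ + 1) (by push_cast; linarith)
        omega
      · have := hkey (2*(a-b)-2) (j₁ + j₂ - 3) (by push_cast; linarith)
        omega
      · have := hkey (2*(a-b)-3) (j₁ - j₂ - 2) (by push_cast; linarith)
        omega
    have hmem : ∀ m, m ∈ M → ∃ v, v ∈ Cset α θ ∧ ∃ j : ℤ, v = θ + 2*π*m + 2*α*j := by
      rintro m ⟨v, hv, j, hj⟩
      exact ⟨v, CsetProof.mem_Cset_of_reach h0 h6' hθ hv, j, hj⟩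
    have hinfM : Infinite ↥M := hMinf.to_subtype
    choose! f hf1 hf2 using hmem
    refine Set.infinite_of_injective_forall_mem
      (f := fun m : ↥M => f (m : ℤ)) ?_ ?_
    · intro m m' hmm'
      obtain ⟨j, hj⟩ := hf2 (m : ℤ) m.2
      obtain ⟨j', hj'⟩ := hf2 (m' : ℤ) m'.2
      simp only at hmm'
      rw [hj, hj'] at hmm'
      have heq : ((2*((m:ℤ) - (m':ℤ)) : ℤ) : ℝ) * π = 2*α*((j' - j : ℤ) : ℝ) := by
        push_cast
        linarith
      have := hkey _ _ heq
      have : (m : ℤ) = (m' : ℤ) := by omega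
      exact Subtype.ext this
    · intro m
      exact hf1 (m : ℤ) m.2
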